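/- Fix an integer q ≥ 2 and an integer n ≥ 1. For each i ∈ {1,…,n}, let f_i(0), …, f_i(q−1) be nonnegative real numbers with Σ_{k=0}^{q−1} f_i(k) = 1, and set x_i = Σ_{k=1}^{q−1} f_i(k). Define S = 2 Σ_{i=1}^{n} ( 1 − Σ_{k=0}^{q−1} f_i(k) cos(2πk/q) ) and V = Σ_{i=1}^{n} ( Σ_{k=0}^{q−1} f_i(k)² + 2 Σ_{0≤k<ℓ≤q−1} f_i(k) f_i(ℓ) cos(2π(k−ℓ)/q) − 2 Σ_{k=0}^{q−1} f_i(k) cos(2πk/q) + 1 ). If V > 0, then S²/V ≥ (1 − cos(2π/q))² · (Σ_{i=1}^{n} x_i)² / (Σ_{i=1}^{n} x_i²). -/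

import Mathlib

open Finset Real

private lemma expand_sq (m : ℕ) (g : ℕ → ℝ) :
    (∑ k ∈ Finset.range m, g k) ^ 2
      = ∑ k ∈ Finset.range m, g k ^ 2
        + 2 * ∑ l ∈ Finset.range m, ∑ k ∈ Finset.range l, g k * g l := by
  induction m with
  | zero => simp
  | succ m ih =>
    rw [Finset.sum_range_succ, Finset.sum_range_succ (f := fun k => g k ^ 2),
      Finset.sum_range_succ (f := fun l => ∑ k ∈ Finset.range l, g k * g l),
      ← Finset.sum_mul]
    linear_combination ih

private lemma cos_bound {q k : ℕ} (hq : 2 ≤ q) (hk1 : 1 ≤ k) (hkq : k < q) :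
    Real.cos (2 * π * k / q) ≤ Real.cos (2 * π / q) := by
  have hπ := Real.pi_pos
  have hq0 : (0:ℝ) < q := by positivity
  have hq2 : (2:ℝ) ≤ q := by exact_mod_cast hq
  have hk1' : (1:ℝ) ≤ k := by exact_mod_cast hk1
  have hkq' : (k:ℝ) + 1 ≤ q := by exact_mod_cast hkq
  have ha0 : 0 ≤ 2 * π / q := by positivity
  have hapi : 2 * π / q ≤ π := by
    rw [div_le_iff₀ hq0]; nlinarith
  have hlb : 2 * π / q ≤ 2 * π * k / q :=
    (div_le_div_iff_of_pos_right hq0).mpr (by nlinarith)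
  have hub : 2 * π * k / q ≤ 2 * π - 2 * π / q := by
    have h1 : 2 * π * k / q + 2 * π / q ≤ 2 * π := by
      rw [← add_div, div_le_iff₀ hq0]; nlinarith
    linarith
  rcases le_total (2 * π * k / q) π with h | h
  · exact Real.cos_le_cos_of_nonneg_of_le_pi ha0 h hlb
  · rw [← Real.cos_two_pi_sub (2 * π * k / q)]
    exact Real.cos_le_cos_of_nonneg_of_le_pi ha0 (by linarith) (by linarith)

theorem squared_pseudodistance_lower_bound {q n : ℕ} (hq : 2 ≤ q) (hn : 1 ≤ n)
    (f : Fin n → ℕ → ℝ)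
    (hf0 : ∀ i, ∀ k < q, 0 ≤ f i k)
    (hf1 : ∀ i, ∑ k ∈ Finset.range q, f i k = 1)
    (x : Fin n → ℝ)
    (hx : ∀ i, x i = ∑ k ∈ Finset.Ico 1 q, f i k)
    (S V : ℝ)
    (hS : S = 2 * ∑ i, (1 - ∑ k ∈ Finset.range q, f i k * Real.cos (2 * π * k / q)))
    (hV : V = ∑ i, (∑ k ∈ Finset.range q, (f i k) ^ 2
        + 2 * ∑ l ∈ Finset.range q, ∑ k ∈ Finset.range l,
            f i k * f i l * Real.cos (2 * π * ((k : ℝ) - l) / q)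
        - 2 * ∑ k ∈ Finset.range q, f i k * Real.cos (2 * π * k / q) + 1))
    (hVpos : 0 < V) :
    S ^ 2 / V ≥ (1 - Real.cos (2 * π / q)) ^ 2 * (∑ i, x i) ^ 2 / (∑ i, (x i) ^ 2) := by
  have hq0 : 0 < q := by omega
  have hπ := Real.pi_pos
  set c : ℝ := 1 - Real.cos (2 * π / q) with hc
  have hc0 : 0 ≤ c := by
    have := Real.cos_le_one (2 * π / q); simp only [hc]; linarith
  have hx0 : ∀ i, 0 ≤ x i := by
    intro i
    rw [hx]
    exact Finset.sum_nonneg fun k hk => hf0 i k (Finset.mem_Ico.mp hk).2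
  have hx_split : ∀ i, f i 0 + x i = 1 := by
    intro i
    rw [hx, ← hf1 i, Finset.range_eq_Ico, Finset.sum_eq_sum_Ico_succ_bot hq0]
  -- Per-row lower bound on the S summand
  have hSb : ∀ i, c * x i ≤ 1 - ∑ k ∈ Finset.range q, f i k * Real.cos (2 * π * k / q) := by
    intro i
    have h1 : 1 - ∑ k ∈ Finset.range q, f i k * Real.cos (2 * π * k / q)
        = ∑ k ∈ Finset.range q, f i k * (1 - Real.cos (2 * π * k / q)) := by
      simp only [mul_sub, mul_one, Finset.sum_sub_distrib, hf1 i]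
    rw [h1, Finset.range_eq_Ico, Finset.sum_eq_sum_Ico_succ_bot hq0]
    have h0 : f i 0 * (1 - Real.cos (2 * π * (0:ℕ) / q)) = 0 := by
      norm_num
    rw [h0, zero_add, hx, Finset.mul_sum]
    apply Finset.sum_le_sum
    intro k hk
    obtain ⟨hk1, hk2⟩ := Finset.mem_Ico.mp hk
    have hcb : c ≤ 1 - Real.cos (2 * π * k / q) := by
      have := cos_bound hq hk1 hk2; simp only [hc]; linarith
    have hf := hf0 i k hk2
    calc c * f i k = f i k * c := mul_comm _ _
      _ ≤ f i k * (1 - Real.cos (2 * π * k / q)) := mul_le_mul_of_nonneg_left hcb hf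
  have hST : 2 * (c * ∑ i, x i) ≤ S := by
    have hsum := Finset.sum_le_sum (fun i (_ : i ∈ Finset.univ) => hSb i)
    rw [← Finset.mul_sum] at hsum
    rw [hS]
    linarith
  -- Per-row upper bound on the V summand
  have hVb : ∀ i, (∑ k ∈ Finset.range q, (f i k) ^ 2
        + 2 * ∑ l ∈ Finset.range q, ∑ k ∈ Finset.range l,
            f i k * f i l * Real.cos (2 * π * ((k : ℝ) - l) / q)
        - 2 * ∑ k ∈ Finset.range q, f i k * Real.cos (2 * π * k / q) + 1)
      ≤ 4 * x i ^ 2 := by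
    intro i
    set a : ℕ → ℝ := fun k => f i k * Real.cos (2 * π * k / q) with ha
    set b : ℕ → ℝ := fun k => f i k * Real.sin (2 * π * k / q) with hb
    set A : ℝ := ∑ k ∈ Finset.range q, a k with hA
    set B : ℝ := ∑ k ∈ Finset.range q, b k with hB
    have hab : ∀ k l : ℕ, f i k * f i l * Real.cos (2 * π * ((k:ℝ) - l) / q)
        = a k * a l + b k * b l := by
      intro k l
      have harg : 2 * π * ((k:ℝ) - l) / q = 2 * π * k / q - 2 * π * l / q := by ring
      rw [harg, Real.cos_sub]
      simp only [ha, hb]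
      ring
    have habsq : ∀ k, a k ^ 2 + b k ^ 2 = f i k ^ 2 := by
      intro k
      have h := Real.sin_sq_add_cos_sq (2 * π * k / q)
      simp only [ha, hb]
      linear_combination (f i k) ^ 2 * h
    have hid : ∑ k ∈ Finset.range q, (f i k) ^ 2
        + 2 * ∑ l ∈ Finset.range q, ∑ k ∈ Finset.range l,
            f i k * f i l * Real.cos (2 * π * ((k : ℝ) - l) / q)
        = A ^ 2 + B ^ 2 := by
      rw [hA, hB, expand_sq q a, expand_sq q b]
      have h1 : ∑ k ∈ Finset.range q, (f i k) ^ 2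
          = ∑ k ∈ Finset.range q, a k ^ 2 + ∑ k ∈ Finset.range q, b k ^ 2 := by
        rw [← Finset.sum_add_distrib]
        exact Finset.sum_congr rfl fun k _ => (habsq k).symm
      have h2 : ∑ l ∈ Finset.range q, ∑ k ∈ Finset.range l,
            f i k * f i l * Real.cos (2 * π * ((k:ℝ) - l) / q)
          = ∑ l ∈ Finset.range q, ∑ k ∈ Finset.range l, a k * a l
            + ∑ l ∈ Finset.range q, ∑ k ∈ Finset.range l, b k * b l := by
        rw [← Finset.sum_add_distrib]
        refine Finset.sum_congr rfl fun l _ => ?_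
        rw [← Finset.sum_add_distrib]
        exact Finset.sum_congr rfl fun k _ => hab k l
      rw [h1, h2]; ring
    -- complex-number bound
    set w : ℕ → ℂ := fun k =>
      (f i k : ℂ) * (Complex.exp ((2 * π * k / q : ℝ) * Complex.I) - 1) with hw
    have hwre : ∀ k, (w k).re = a k - f i k := by
      intro k
      simp only [hw, ha, Complex.mul_re, Complex.ofReal_re, Complex.ofReal_im,
        Complex.sub_re, Complex.sub_im, Complex.one_re, Complex.one_im,
        Complex.exp_ofReal_mul_I_re, Complex.exp_ofReal_mul_I_im]
      ring
    have hwim : ∀ k, (w k).im = b k := by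
      intro k
      simp only [hw, hb, Complex.mul_im, Complex.ofReal_re, Complex.ofReal_im,
        Complex.sub_re, Complex.sub_im, Complex.one_re, Complex.one_im,
        Complex.exp_ofReal_mul_I_re, Complex.exp_ofReal_mul_I_im]
      ring
    have ha0 : a 0 = f i 0 := by simp [ha]
    have hb0 : b 0 = 0 := by simp [hb]
    have hsre : (∑ k ∈ Finset.Ico 1 q, w k).re = A - 1 := by
      rw [Complex.re_sum]
      have : ∑ k ∈ Finset.Ico 1 q, (w k).re
          = ∑ k ∈ Finset.Ico 1 q, (a k - f i k) :=
        Finset.sum_congr rfl fun k _ => hwre k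
      rw [this, Finset.sum_sub_distrib, ← hx i]
      have hAsplit : A = a 0 + ∑ k ∈ Finset.Ico 1 q, a k := by
        rw [hA, Finset.range_eq_Ico, Finset.sum_eq_sum_Ico_succ_bot hq0]
      have := hx_split i
      rw [hAsplit, ha0]
      linarith
    have hsim : (∑ k ∈ Finset.Ico 1 q, w k).im = B := by
      rw [Complex.im_sum]
      have h1 : ∑ k ∈ Finset.Ico 1 q, (w k).im = ∑ k ∈ Finset.Ico 1 q, b k :=
        Finset.sum_congr rfl fun k _ => hwim k
      have hBsplit : B = b 0 + ∑ k ∈ Finset.Ico 1 q, b k := by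
        rw [hB, Finset.range_eq_Ico, Finset.sum_eq_sum_Ico_succ_bot hq0]
      rw [h1, hBsplit, hb0, zero_add]
    have hnorm : ‖∑ k ∈ Finset.Ico 1 q, w k‖ ≤ 2 * x i := by
      calc ‖∑ k ∈ Finset.Ico 1 q, w k‖ ≤ ∑ k ∈ Finset.Ico 1 q, ‖w k‖ :=
            norm_sum_le _ _
        _ ≤ ∑ k ∈ Finset.Ico 1 q, 2 * f i k := by
            apply Finset.sum_le_sum
            intro k hk
            obtain ⟨_, hk2⟩ := Finset.mem_Ico.mp hk
            have hf := hf0 i k hk2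
            rw [hw]
            simp only [norm_mul, Complex.norm_real, Real.norm_eq_abs, abs_of_nonneg hf]
            have h1 : ‖Complex.exp ((2 * π * k / q : ℝ) * Complex.I) - 1‖ ≤ 2 := by
              calc ‖Complex.exp ((2 * π * k / q : ℝ) * Complex.I) - 1‖
                  ≤ ‖Complex.exp ((2 * π * k / q : ℝ) * Complex.I)‖ + ‖(1:ℂ)‖ :=
                    norm_sub_le _ _
                _ = 2 := by
                    rw [Complex.norm_exp_ofReal_mul_I]
                    norm_num
            nlinarith
        _ = 2 * x i := by rw [← Finset.mul_sum, hx i]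
    have hfin : (A - 1) ^ 2 + B ^ 2 ≤ 4 * x i ^ 2 := by
      have heq : (A - 1) ^ 2 + B ^ 2 = ‖∑ k ∈ Finset.Ico 1 q, w k‖ ^ 2 := by
        rw [Complex.sq_norm, Complex.normSq_apply, hsre, hsim]
        ring
      rw [heq]
      calc ‖∑ k ∈ Finset.Ico 1 q, w k‖ ^ 2 ≤ (2 * x i) ^ 2 :=
            pow_le_pow_left₀ (norm_nonneg _) hnorm 2
        _ = 4 * x i ^ 2 := by ring
    nlinarith [hid, hfin]
  have hVU : V ≤ 4 * ∑ i, (x i) ^ 2 := by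
    have h1 : V ≤ ∑ i, 4 * (x i) ^ 2 := by
      rw [hV]; exact Finset.sum_le_sum fun i _ => hVb i
    calc V ≤ ∑ i, 4 * (x i) ^ 2 := h1
      _ = 4 * ∑ i, (x i) ^ 2 := by rw [Finset.mul_sum]
  have hT0 : 0 ≤ ∑ i, x i := Finset.sum_nonneg fun i _ => hx0 i
  have hU0 : 0 ≤ ∑ i, (x i) ^ 2 := Finset.sum_nonneg fun i _ => sq_nonneg _
  by_cases hU : (∑ i, (x i) ^ 2) = 0
  · rw [hU, div_zero]
    exact div_nonneg (sq_nonneg S) hVpos.le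
  · have hUpos : 0 < ∑ i, (x i) ^ 2 := lt_of_le_of_ne hU0 (Ne.symm hU)
    have hS0 : 0 ≤ 2 * (c * ∑ i, x i) := by positivity
    have hSsq : (2 * (c * ∑ i, x i)) ^ 2 ≤ S ^ 2 := pow_le_pow_left₀ hS0 hST 2
    have key : c ^ 2 * (∑ i, x i) ^ 2 / (∑ i, (x i) ^ 2)
        = (2 * (c * ∑ i, x i)) ^ 2 / (4 * ∑ i, (x i) ^ 2) := by
      rw [div_eq_div_iff hUpos.ne' (show (4 * ∑ i, (x i) ^ 2) ≠ 0 by positivity)]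
      ring
    rw [ge_iff_le]
    calc c ^ 2 * (∑ i, x i) ^ 2 / (∑ i, (x i) ^ 2)
        = (2 * (c * ∑ i, x i)) ^ 2 / (4 * ∑ i, (x i) ^ 2) := key
      _ ≤ S ^ 2 / (4 * ∑ i, (x i) ^ 2) := by
          exact (div_le_div_iff_of_pos_right (by positivity)).mpr hSsq
      _ ≤ S ^ 2 / V := div_le_div_of_nonneg_left (sq_nonneg S) hVpos hVU
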